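/- Assume in addition τ(θ) + τ''(θ) > 0 for all θ ∈ (0, π/2), and let x > 0. Then θ ↦ g(θ, x) is strictly decreasing on (0, θ_Y] and strictly increasing on [θ_Y, π/2); in particular g(θ, x) > g(θ_Y, x) for every θ ∈ (0, π/2) with θ ≠ θ_Y, so θ_Y is the strict absolute minimum of g(·, x) on (0, π/2). -/

import Mathlib

open Real

/-- Under positive stiffness `τ(θ) + τ''(θ) > 0` on `(0, π/2)`, the
function `θ ↦ g(θ, x)` is strictly decreasing on `(0, θ_Y]` and strictly increasing on
`[θ_Y, π/2)`, so `θ_Y` is its strict absolute minimum on `(0, π/2)`. -/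
theorem herring_young_strict_minimum
    (τ τ' τ'' : ℝ → ℝ) (τbd : ℝ)
    (hd1 : ∀ θ ∈ Set.Ioo (0 : ℝ) (π / 2), HasDerivAt τ (τ' θ) θ)
    (hd2 : ∀ θ ∈ Set.Ioo (0 : ℝ) (π / 2), HasDerivAt τ' (τ'' θ) θ)
    (hc : ContinuousOn τ'' (Set.Ioo (0 : ℝ) (π / 2)))
    (θY : ℝ) (hθY : θY ∈ Set.Ioo (0 : ℝ) (π / 2))
    (hHY : Real.cos θY * τ θY - Real.sin θY * τ' θY = τbd)
    (hstiff : ∀ θ ∈ Set.Ioo (0 : ℝ) (π / 2), 0 < τ θ + τ'' θ)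
    (x : ℝ) (hx : 0 < x)
    (g : ℝ → ℝ → ℝ)
    (hg : ∀ θ y : ℝ, g θ y = τ θ * y / Real.sin θ + τbd * (1 / 2 - y / Real.tan θ)) :
    StrictAntiOn (fun θ => g θ x) (Set.Ioc (0 : ℝ) θY) ∧
      StrictMonoOn (fun θ => g θ x) (Set.Ico θY (π / 2)) ∧
      ∀ θ ∈ Set.Ioo (0 : ℝ) (π / 2), θ ≠ θY → g θ x > g θY x := by
  set I := Set.Ioo (0 : ℝ) (π / 2) with hI
  have hIopen : IsOpen I := isOpen_Ioo
  -- basic facts on I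
  have hsin : ∀ θ ∈ I, 0 < Real.sin θ := fun θ hθ =>
    Real.sin_pos_of_pos_of_lt_pi hθ.1 (lt_trans hθ.2 (by linarith [Real.pi_pos]))
  have hcos : ∀ θ ∈ I, 0 < Real.cos θ := fun θ hθ =>
    Real.cos_pos_of_mem_Ioo ⟨by linarith [hθ.1, Real.pi_pos], hθ.2⟩
  -- auxiliary function h
  set h : ℝ → ℝ := fun θ => Real.cos θ * τ θ - Real.sin θ * τ' θ - τbd with hh
  have hhd : ∀ θ ∈ I, HasDerivAt h (-(Real.sin θ * (τ θ + τ'' θ))) θ := by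
    intro θ hθ
    have h1 : HasDerivAt (fun θ => Real.cos θ * τ θ)
        (-Real.sin θ * τ θ + Real.cos θ * τ' θ) θ :=
      (Real.hasDerivAt_cos θ).mul (hd1 θ hθ)
    have h2 : HasDerivAt (fun θ => Real.sin θ * τ' θ)
        (Real.cos θ * τ' θ + Real.sin θ * τ'' θ) θ :=
      (Real.hasDerivAt_sin θ).mul (hd2 θ hθ)
    have := (h1.sub h2).sub_const τbd
    refine this.congr_deriv (Eq.symm ?_)
    ring
  have hhanti : StrictAntiOn h I := by
    apply strictAntiOn_of_deriv_neg (convex_Ioo _ _)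
    · intro θ hθ
      exact (hhd θ hθ).continuousAt.continuousWithinAt
    · intro θ hθ
      rw [interior_Ioo] at hθ
      rw [(hhd θ hθ).deriv]
      have := hstiff θ hθ
      have := hsin θ hθ
      nlinarith
  have hhY : h θY = 0 := by simp [hh, hHY]
  -- derivative of f
  set f : ℝ → ℝ := fun θ => g θ x with hf
  have hfd : ∀ θ ∈ I, HasDerivAt f (x * (-h θ) / Real.sin θ ^ 2) θ := by
    intro θ hθ
    have hs := (hsin θ hθ).ne'
    have hc' := (hcos θ hθ).ne'
    -- F agrees with f near θ
    have hFd : HasDerivAt (fun θ => x * (τ θ - τbd * Real.cos θ) / Real.sin θ + τbd / 2)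
        (x * (-h θ) / Real.sin θ ^ 2) θ := by
      have hnum : HasDerivAt (fun θ => x * (τ θ - τbd * Real.cos θ))
          (x * (τ' θ - τbd * (-Real.sin θ))) θ :=
        (((hd1 θ hθ).sub ((Real.hasDerivAt_cos θ).const_mul τbd))).const_mul x
      have := (hnum.div (Real.hasDerivAt_sin θ) hs).add_const (τbd / 2)
      refine this.congr_deriv (Eq.symm ?_)
      have hpy : Real.sin θ ^ 2 + Real.cos θ ^ 2 = 1 := Real.sin_sq_add_cos_sq θ
      field_simp [hh]
      linear_combination (-τbd) * hpy
    apply hFd.congr_of_eventuallyEq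
    filter_upwards [hIopen.mem_nhds hθ] with y hy
    have hsy := (hsin y hy).ne'
    have hcy := (hcos y hy).ne'
    simp only [hf, hg, Real.tan_eq_sin_div_cos]
    field_simp
    ring
  have hcont : ∀ θ ∈ I, ContinuousAt f θ := fun θ hθ => (hfd θ hθ).continuousAt
  have hsubL : Set.Ioc (0 : ℝ) θY ⊆ I := fun θ hθ => ⟨hθ.1, lt_of_le_of_lt hθ.2 hθY.2⟩
  have hsubR : Set.Ico θY (π / 2) ⊆ I := fun θ hθ => ⟨lt_of_lt_of_le hθY.1 hθ.1, hθ.2⟩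
  have hanti : StrictAntiOn f (Set.Ioc (0 : ℝ) θY) := by
    apply strictAntiOn_of_deriv_neg (convex_Ioc _ _)
    · intro θ hθ; exact (hcont θ (hsubL hθ)).continuousWithinAt
    · intro θ hθ
      rw [interior_Ioc] at hθ
      have hθI : θ ∈ I := ⟨hθ.1, lt_trans hθ.2 hθY.2⟩
      rw [(hfd θ hθI).deriv]
      have hhpos : 0 < h θ := by
        have := hhanti hθI hθY hθ.2
        rwa [hhY] at this
      have := hsin θ hθI
      have : (0:ℝ) < Real.sin θ ^ 2 := by positivity
      apply div_neg_of_neg_of_pos _ this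
      nlinarith
  have hmono : StrictMonoOn f (Set.Ico θY (π / 2)) := by
    apply strictMonoOn_of_deriv_pos (convex_Ico _ _)
    · intro θ hθ; exact (hcont θ (hsubR hθ)).continuousWithinAt
    · intro θ hθ
      rw [interior_Ico] at hθ
      have hθI : θ ∈ I := ⟨lt_trans hθY.1 hθ.1, hθ.2⟩
      rw [(hfd θ hθI).deriv]
      have hhneg : h θ < 0 := by
        have := hhanti hθY hθI hθ.1
        rwa [hhY] at this
      have := hsin θ hθI
      have : (0:ℝ) < Real.sin θ ^ 2 := by positivity
      apply div_pos _ this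
      nlinarith
  refine ⟨hanti, hmono, ?_⟩
  intro θ hθ hne
  rcases lt_or_gt_of_ne hne with hlt | hgt
  · exact hanti ⟨hθ.1, le_of_lt hlt⟩ ⟨hθY.1, le_refl _⟩ hlt
  · exact hmono ⟨le_refl _, hθY.2⟩ ⟨le_of_lt hgt, hθ.2⟩ hgt
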